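/- With generic initial conditions $\rho_0^a, \rho_0^v \ge 0$, the cumulative infections of the linearized two-group SIS dynamics satisfy $CI^a \ge CI^v$ if and only if $\rho_0^v(1-x^a) - \rho_0^a(1-x^v) + \mu(\rho_0^a - \rho_0^v) \ge 0$. -/
import Mathlib


/-- With generic initial conditions `ρ₀ᵃ, ρ₀ᵛ ≥ 0`, the cumulative
infections of the linearized two-group SIS dynamics satisfy
`CIᵃ ≥ CIᵛ ↔ ρ₀ᵛ(1-xa) - ρ₀ᵃ(1-xv) + μ(ρ₀ᵃ - ρ₀ᵛ) ≥ 0`. -/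
theorem stmt_8 (h q xa xv μ ρ0a ρ0v : ℝ)
    (hh : h ∈ Set.Ico (0:ℝ) 1) (hq : q ∈ Set.Ico (0:ℝ) 1)
    (hxa : 0 ≤ xa) (hxav : xa ≤ xv) (hxv : xv ≤ 1)
    (hρ0a : 0 ≤ ρ0a) (hρ0v : 0 ≤ ρ0v)
    (qa qv T Δ μhat CIa CIv : ℝ)
    (hqa : qa = h + (1-h)*q) (hqv : qv = h + (1-h)*(1-q))
    (hT : T = qa*(1-xa) + qv*(1-xv))
    (hΔ : Δ = Real.sqrt (T^2 - 4*h*(1-xa)*(1-xv)))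
    (hμhat : μhat = (T + Δ)/2) (hstab : μhat < μ)
    (hCIa : CIa = 2*(ρ0a*(μ - (1-xv)*qv) + ρ0v*(1-xa)*(1-qa))
      / ((T - 2*μ - Δ) * (T - 2*μ + Δ)))
    (hCIv : CIv = 2*(ρ0a*(1-xv)*(1-qv) + ρ0v*(μ - (1-xa)*qa))
      / ((T - 2*μ - Δ) * (T - 2*μ + Δ))) :
    CIv ≤ CIa ↔ 0 ≤ ρ0v*(1-xa) - ρ0a*(1-xv) + μ*(ρ0a - ρ0v) := by
  have hΔ0 : 0 ≤ Δ := hΔ ▸ Real.sqrt_nonneg _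
  have hD : 0 < (T - 2*μ - Δ) * (T - 2*μ + Δ) :=
    mul_pos_of_neg_of_neg (by linarith) (by linarith)
  rw [hCIa, hCIv, div_le_div_iff_of_pos_right hD]
  constructor <;> intro h' <;> nlinarith [h']
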